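/- Let κ₁, κ₂ ∈ ℂ with κ₁ ∉ I(E_{κ₁}) and κ₂ ∉ I(E_{κ₂}). Then there exists a bijection Φ : I(E_{κ₁}) → I(E_{κ₂}) such that Φ(E_{κ₁}(z)) = E_{κ₂}(Φ(z)) and |E_{κ₁}ⁿ(z) − E_{κ₂}ⁿ(Φ(z))| → 0 as n → ∞, for every z ∈ I(E_{κ₁}). -/

import Mathlib

open Filter Topology ENNReal

noncomputable section

/-- The space of external addresses: integer sequences (indexed from 0, so index `k`
corresponds to the entry `s_{k+1}` of the paper) with the lexicographic order. -/
abbrev Addr : Type := Lex (ℕ → ℤ)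

/-- The shift map `σ` on external addresses. -/
def shiftA (s : Addr) : Addr := toLex (fun n => ofLex s (n + 1))

/-- The model growth function `F(t) = e^t - 1`. -/
def Fexp (t : ℝ) : ℝ := Real.exp t - 1

/-- The model map `𝓕(s,t) = (σ s, F t - 2π |s₂|)`. -/
def Fmod (p : Addr × ℝ) : Addr × ℝ :=
  (shiftA p.1, Fexp p.2 - 2 * Real.pi * |((ofLex p.1 1 : ℤ) : ℝ)|)

/-- The model set `X̄ = {(s,t) : T(𝓕ⁿ(s,t)) ≥ 0 for all n ≥ 0}`. -/
def Xbar : Set (Addr × ℝ) := {p | ∀ n : ℕ, 0 ≤ (Fmod^[n] p).2}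

/-- The model escaping set `X = {(s,t) ∈ X̄ : T(𝓕ⁿ(s,t)) → ∞}`. -/
def Xset : Set (Addr × ℝ) :=
  {p | p ∈ Xbar ∧ Tendsto (fun n : ℕ => (Fmod^[n] p).2) atTop atTop}

/-- The minimal potential `t_s ∈ [0,∞]` of an address (`∞` if `(s,t) ∉ X̄` for all `t ≥ 0`). -/
def tS (s : Addr) : ℝ≥0∞ :=
  sInf (ENNReal.ofReal '' {t : ℝ | 0 ≤ t ∧ (s, t) ∈ Xbar})

/-- The exponential map `E_κ(z) = e^z + κ`. -/
def Eexp (κ : ℂ) (z : ℂ) : ℂ := Complex.exp z + κ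

/-- The escaping set `I(E_κ)`. -/
def escapingSet (κ : ℂ) : Set ℂ :=
  {z | Tendsto (fun n : ℕ => ‖(Eexp κ)^[n] z‖) atTop atTop}

/-- The order topology induced by the lexicographic order on external addresses. -/
instance : TopologicalSpace Addr := Preorder.topology Addr
instance : OrderTopology Addr := ⟨rfl⟩

namespace Rig

/-- the 2πi period -/
def tp : ℂ := 2 * Real.pi * Complex.I

lemma exp_tp_int (n : ℤ) : Complex.exp ((n : ℂ) * tp) = 1 :=
  Complex.exp_int_mul_two_pi_mul_I n

/-- strip label -/
def lab (z : ℂ) : ℤ := ⌊(z.im + Real.pi) / (2 * Real.pi)⌋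

lemma im_int_tp (n : ℤ) (z : ℂ) : (z + (n : ℂ) * tp).im = z.im + n * (2 * Real.pi) := by
  simp [tp, Complex.add_im, Complex.mul_im, Complex.mul_re]

lemma lab_add_int_tp (z : ℂ) (n : ℤ) : lab (z + (n : ℂ) * tp) = lab z + n := by
  unfold lab
  rw [im_int_tp]
  have h2π : (0:ℝ) < 2 * Real.pi := by positivity
  rw [show z.im + ↑n * (2 * Real.pi) + Real.pi = (z.im + Real.pi) + ↑n * (2 * Real.pi) by ring]
  rw [add_div, mul_div_assoc, div_self (ne_of_gt h2π), mul_one, Int.floor_add_intCast]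

lemma eq_of_exp_eq_of_lab_eq {u v : ℂ} (h : Complex.exp u = Complex.exp v)
    (hl : lab u = lab v) : u = v := by
  obtain ⟨n, hn⟩ := Complex.exp_eq_exp_iff_exists_int.mp h
  have : lab u = lab v + n := by
    rw [hn]; exact lab_add_int_tp v n
  have hn0 : n = 0 := by omega
  simp [hn0] at hn; exact hn

/-- the labelled inverse branch of `Eexp κ` -/
def pb (κ v : ℂ) (n : ℤ) : ℂ :=
  Complex.log (v - κ) + ((n - lab (Complex.log (v - κ)) : ℤ) : ℂ) * tp

lemma pb_lab (κ v : ℂ) (n : ℤ) : lab (pb κ v n) = n := by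
  unfold pb
  rw [lab_add_int_tp]; ring

lemma pb_exp {κ v : ℂ} (h : v ≠ κ) (n : ℤ) : Eexp κ (pb κ v n) = v := by
  unfold Eexp pb
  rw [Complex.exp_add, exp_tp_int, mul_one, Complex.exp_log (sub_ne_zero.mpr h)]
  ring

lemma pb_unique {κ a v : ℂ} {n : ℤ} (h : Eexp κ a = v) (hl : lab a = n) :
    pb κ v n = a := by
  have hv : v ≠ κ := by
    intro hv
    have : Complex.exp a = 0 := by
      have := h; unfold Eexp at this; rw [hv] at this
      linear_combination this
    exact Complex.exp_ne_zero a this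
  apply eq_of_exp_eq_of_lab_eq
  · have h1 := pb_exp hv n
    unfold Eexp at h1 h
    have : Complex.exp (pb κ v n) = v - κ := by linear_combination h1
    rw [this]
    linear_combination -h
  · rw [pb_lab, hl]

end Rig

namespace Rig

variable {κ : ℂ}

lemma mem_escaping_iff_apply {z : ℂ} :
    Eexp κ z ∈ escapingSet κ ↔ z ∈ escapingSet κ := by
  constructor
  · intro h
    have : Tendsto (fun n : ℕ => ‖(Eexp κ)^[n+1] z‖) atTop atTop := by
      exact h
    exact (tendsto_add_atTop_iff_nat 1).mp this
  · intro h
    have := (tendsto_add_atTop_iff_nat (f := fun n : ℕ => ‖(Eexp κ)^[n] z‖) 1).mpr h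
    exact this

lemma iterate_mem_escaping_iff {z : ℂ} (m : ℕ) :
    (Eexp κ)^[m] z ∈ escapingSet κ ↔ z ∈ escapingSet κ := by
  induction m with
  | zero => simp
  | succ n ih =>
    rw [Function.iterate_succ_apply', mem_escaping_iff_apply, ih]

lemma escaping_abs_tendsto {z : ℂ} (h : z ∈ escapingSet κ) :
    Tendsto (fun n : ℕ => ‖(Eexp κ)^[n] z‖) atTop atTop := h

lemma escaping_ne_singular {z : ℂ} (h : z ∈ escapingSet κ) (hκ : κ ∉ escapingSet κ) :
    z ≠ κ := by rintro rfl; exact hκ h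

/-- escaping points are not periodic -/
lemma not_periodic {z : ℂ} (h : z ∈ escapingSet κ) {p : ℕ} (hp : 0 < p) :
    (Eexp κ)^[p] z ≠ z := by
  intro hper
  have hiter : ∀ k : ℕ, (Eexp κ)^[k * p] z = z := by
    intro k
    induction k with
    | zero => simp
    | succ n ih => rw [Nat.succ_mul, Function.iterate_add_apply, hper, ih]
  obtain ⟨N, hN⟩ := (tendsto_atTop.mp h (‖z‖ + 1)).exists_forall_of_atTop
  have h1 : N * p ≥ N := Nat.le_mul_of_pos_right N hp
  have := hN (N * p) h1
  rw [hiter N] at this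
  linarith

/-- Real parts of an escaping orbit tend to infinity. -/
lemma re_tendsto {z : ℂ} (h : z ∈ escapingSet κ) :
    Tendsto (fun n : ℕ => ((Eexp κ)^[n] z).re) atTop atTop := by
  rw [tendsto_atTop]
  intro b
  have h2 : Tendsto (fun n : ℕ => ‖(Eexp κ)^[n+1] z‖) atTop atTop :=
    (tendsto_add_atTop_iff_nat 1).mpr h
  filter_upwards [h2.eventually_ge_atTop (Real.exp b + ‖κ‖)] with n hn
  have key : Real.exp (((Eexp κ)^[n] z).re) = ‖(Eexp κ)^[n+1] z - κ‖ := by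
    rw [Function.iterate_succ_apply']
    unfold Eexp
    rw [add_sub_cancel_right, Complex.norm_exp]
  have h3 : ‖(Eexp κ)^[n+1] z - κ‖ ≥ ‖(Eexp κ)^[n+1] z‖ - ‖κ‖ := by
    have := norm_sub_norm_le ((Eexp κ)^[n+1] z) κ
    have h4 := abs_le.mp (le_refl |‖(Eexp κ)^[n+1] z‖ - ‖κ‖|)
    have h5 := abs_sub_abs_le_abs_sub (‖(Eexp κ)^[n+1] z‖) (0:ℝ)
    calc ‖(Eexp κ)^[n+1] z‖ - ‖κ‖
        ≤ |‖(Eexp κ)^[n+1] z‖ - ‖κ‖| := le_abs_self _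
      _ = |‖(Eexp κ)^[n+1] z‖ - ‖κ‖| := rfl
      _ ≤ ‖(Eexp κ)^[n+1] z - κ‖ := abs_norm_sub_norm_le _ _
  have : Real.exp b ≤ Real.exp (((Eexp κ)^[n] z).re) := by
    rw [key]; linarith
  exact (Real.exp_le_exp.mp this)

end Rig

namespace Rig

lemma abs_exp_sub_one_ge {d : ℂ} (hd : ‖d‖ ≤ 1) :
    ‖d‖ - ‖d‖ ^ 2 ≤ ‖Complex.exp d - 1‖ := by
  have h3 := Complex.norm_exp_sub_one_sub_id_le hd
  have h5 := norm_add_le (Complex.exp d - 1 - d) d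
  have h6 := norm_add_le (d - (Complex.exp d - 1)) (Complex.exp d - 1)
  simp only [sub_add_cancel] at h5 h6
  have h7 : ‖d - (Complex.exp d - 1)‖ = ‖Complex.exp d - 1 - d‖ :=
    norm_sub_rev _ _
  rw [h7] at h6
  linarith

/-- expansion estimate -/
lemma exp_expansion {u v : ℂ} (hre : Real.log 4 ≤ u.re)
    (hd : ‖u - v‖ ≤ 1/2) :
    2 * ‖u - v‖ ≤ ‖Complex.exp u - Complex.exp v‖ := by
  set d := v - u with hdef
  have habs : ‖d‖ ≤ 1/2 := by
    rw [hdef, norm_sub_rev]; exact hd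
  have h1 : Complex.exp u - Complex.exp v = Complex.exp u * (1 - Complex.exp d) := by
    rw [mul_sub, mul_one, ← Complex.exp_add]
    congr 2
    rw [hdef]; ring
  have h4 : ‖Complex.exp d - 1‖ ≥ ‖d‖ - ‖d‖ ^ 2 :=
    abs_exp_sub_one_ge (by linarith)
  have h2 : ‖1 - Complex.exp d‖ ≥ ‖d‖ - ‖d‖ ^ 2 := by
    rw [norm_sub_rev]; exact h4
  have h7 : (4:ℝ) ≤ ‖Complex.exp u‖ := by
    rw [Complex.norm_exp]
    calc (4:ℝ) = Real.exp (Real.log 4) := by rw [Real.exp_log]; norm_num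
      _ ≤ Real.exp u.re := Real.exp_le_exp.mpr hre
  have h8 : ‖u - v‖ = ‖d‖ := norm_sub_rev _ _
  rw [h1, norm_mul, h8]
  nlinarith [norm_nonneg d, norm_nonneg (1 - Complex.exp d),
    norm_nonneg (Complex.exp u)]

/-- Rigidity: two escaping orbits of the same map which are asymptotic are
eventually equal. -/
lemma rigidity {κ : ℂ} {u v : ℂ} (hu : u ∈ escapingSet κ)
    (hdist : Tendsto (fun k : ℕ => ‖(Eexp κ)^[k] u - (Eexp κ)^[k] v‖)
      atTop (𝓝 0)) :
    ∃ m : ℕ, (Eexp κ)^[m] u = (Eexp κ)^[m] v := by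
  set δ : ℕ → ℝ := fun k => ‖(Eexp κ)^[k] u - (Eexp κ)^[k] v‖ with hδ
  have hre := re_tendsto hu
  have h1 : ∀ᶠ k in atTop, Real.log 4 ≤ ((Eexp κ)^[k] u).re := hre.eventually_ge_atTop _
  have h2 : ∀ᶠ k in atTop, δ k ≤ 1/2 := by
    filter_upwards [hdist.eventually_lt_const (show (0:ℝ) < 1/2 by norm_num)] with k hk
    exact hk.le
  obtain ⟨K, hK⟩ := (h1.and h2).exists_forall_of_atTop
  refine ⟨K, ?_⟩
  have step : ∀ k, K ≤ k → 2 * δ k ≤ δ (k + 1) := by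
    intro k hk
    have hkk := hK k hk
    have : δ (k+1) = ‖Complex.exp ((Eexp κ)^[k] u) - Complex.exp ((Eexp κ)^[k] v)‖ := by
      simp only [hδ, Function.iterate_succ_apply']
      unfold Eexp
      congr 1
      ring
    rw [this]
    exact exp_expansion hkk.1 hkk.2
  have grow : ∀ m : ℕ, 2 ^ m * δ K ≤ δ (K + m) := by
    intro m
    induction m with
    | zero => simp
    | succ n ih =>
      have := step (K + n) (Nat.le_add_right _ _)
      calc 2 ^ (n+1) * δ K = 2 * (2 ^ n * δ K) := by ring
        _ ≤ 2 * δ (K + n) := by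
            have : (0:ℝ) ≤ 2 := by norm_num
            nlinarith
        _ ≤ δ (K + n + 1) := this
      |>.trans_eq (by ring_nf)
  have hδK : δ K = 0 := by
    by_contra hne
    have hpos : 0 < δ K := lt_of_le_of_ne (norm_nonneg _) (Ne.symm hne)
    have : ∀ m : ℕ, 2 ^ m * δ K ≤ 1/2 := by
      intro m
      have := grow m
      have h3 := (hK (K + m) (Nat.le_add_right _ _)).2
      linarith
    obtain ⟨m, hm⟩ := pow_unbounded_of_one_lt (y := (2:ℝ)) ((1/2)/δ K) (by norm_num)
    have := this m
    rw [div_lt_iff₀ hpos] at hm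
    linarith
  exact sub_eq_zero.mp (norm_eq_zero.mp hδK)

end Rig

namespace Rig

def Mc (κ₁ κ₂ : ℂ) : ℝ := ‖κ₁‖ + ‖κ₂‖ + 1

def Rc (κ₁ κ₂ : ℂ) : ℝ := Mc κ₁ κ₂ + Real.log (100 * (Mc κ₁ κ₂ + 1))

lemma Mc_ge_one (κ₁ κ₂ : ℂ) : 1 ≤ Mc κ₁ κ₂ := by
  unfold Mc
  have := norm_nonneg κ₁
  have := norm_nonneg κ₂
  linarith

lemma exp_neg_Rc_le (κ₁ κ₂ : ℂ) :
    Real.exp (-(Rc κ₁ κ₂)) ≤ 1 / (100 * (Mc κ₁ κ₂ + 1)) := by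
  have hM := Mc_ge_one κ₁ κ₂
  have hpos : (0:ℝ) < 100 * (Mc κ₁ κ₂ + 1) := by linarith
  unfold Rc
  rw [neg_add, Real.exp_add, Real.exp_neg (Real.log _), Real.exp_log hpos]
  have h1 : Real.exp (-(Mc κ₁ κ₂)) ≤ 1 := by
    rw [Real.exp_le_one_iff]; linarith
  rw [one_div]
  calc Real.exp (-(Mc κ₁ κ₂)) * (100 * (Mc κ₁ κ₂ + 1))⁻¹
      ≤ 1 * (100 * (Mc κ₁ κ₂ + 1))⁻¹ := by
        apply mul_le_mul_of_nonneg_right h1 (by positivity)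
    _ = (100 * (Mc κ₁ κ₂ + 1))⁻¹ := one_mul _

/-- The tail shadowing lemma: if the whole orbit of `z` under `E_{κ₁}` lies in
`Re ≥ R`, then there is an orbit of `E_{κ₂}` asymptotic to it. -/
lemma shadow_tail (κ₁ κ₂ : ℂ) {z : ℂ} (hz : z ∈ escapingSet κ₁)
    (hR : ∀ k : ℕ, Rc κ₁ κ₂ ≤ ((Eexp κ₁)^[k] z).re) :
    ∃ w ∈ escapingSet κ₂,
      Tendsto (fun k : ℕ => ‖(Eexp κ₁)^[k] z - (Eexp κ₂)^[k] w‖)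
        atTop (𝓝 0) := by
  set M := Mc κ₁ κ₂ with hMdef
  have hM := Mc_ge_one κ₁ κ₂
  set Z : ℕ → ℂ := fun k => (Eexp κ₁)^[k] z with hZdef
  -- basic bound on the exponential weight
  have hexpw : ∀ k : ℕ, Real.exp (-(Z k).re) ≤ 1 / (100 * (M + 1)) := by
    intro k
    calc Real.exp (-(Z k).re) ≤ Real.exp (-(Rc κ₁ κ₂)) := by
          apply Real.exp_le_exp.mpr; simp only [neg_le_neg_iff]; exact hR k
      _ ≤ 1 / (100 * (M + 1)) := exp_neg_Rc_le κ₁ κ₂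
  have hMpos : (0:ℝ) < 100 * (M+1) := by linarith
  have hsmall : ∀ k : ℕ, 2 * (M + 1) * Real.exp (-(Z k).re) ≤ 1/50 := by
    intro k
    have h1 := hexpw k
    have h2 : Real.exp (-(Z k).re) * (100 * (M+1)) ≤ 1 := by
      rw [← le_div_iff₀ hMpos]; simpa [one_div] using h1
    nlinarith [Real.exp_pos (-(Z k).re)]
  -- the backward pullback approximants
  set g : ℕ → ℂ → ℂ := fun k ζ => Z k + Complex.log ((ζ - κ₂) * Complex.exp (-(Z k)))
    with hgdef
  set aux : ℕ → ℕ → ℂ := fun m => Nat.rec (fun k => Z k)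
    (fun _ prev k => g k (prev (k+1))) m with hauxdef
  have aux_zero : ∀ k, aux 0 k = Z k := fun _ => rfl
  have aux_succ : ∀ m k, aux (m+1) k = g k (aux m (k+1)) := fun _ _ => rfl
  -- the key algebraic identity
  have hZsucc : ∀ k, Z (k+1) = Complex.exp (Z k) + κ₁ := by
    intro k
    simp only [hZdef, Function.iterate_succ_apply']
    rfl
  have key : ∀ (k : ℕ) (ζ : ℂ), (ζ - κ₂) * Complex.exp (-(Z k)) =
      1 + ((ζ - Z (k+1)) + (κ₁ - κ₂)) * Complex.exp (-(Z k)) := by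
    intro k ζ
    have hZ := hZsucc k
    have he : Complex.exp (Z k) * Complex.exp (-(Z k)) = 1 := by
      rw [← Complex.exp_add]; simp
    linear_combination Complex.exp (-(Z k)) * hZ + he
  have habsc : ‖κ₁ - κ₂‖ ≤ M := by
    calc ‖κ₁ - κ₂‖ ≤ ‖κ₁‖ + ‖κ₂‖ := norm_sub_le _ _
      _ ≤ M := by rw [hMdef]; unfold Mc; linarith
  have habse : ∀ k : ℕ, ‖Complex.exp (-(Z k))‖ = Real.exp (-(Z k).re) := by
    intro k; rw [Complex.norm_exp]; simp
  -- the main inductive bound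
  have bnd : ∀ m k, ‖aux m k - Z k‖ ≤ 2 * (M + 1) * Real.exp (-(Z k).re) := by
    intro m
    induction m with
    | zero =>
      intro k
      rw [aux_zero]
      simp
      positivity
    | succ n ih =>
      intro k
      rw [aux_succ]
      set ζ := aux n (k+1) with hζ
      have hd : ‖ζ - Z (k+1)‖ ≤ 1 := by
        calc ‖ζ - Z (k+1)‖ ≤ 2 * (M+1) * Real.exp (-(Z (k+1)).re) := ih (k+1)
          _ ≤ 1/50 := hsmall (k+1)
          _ ≤ 1 := by norm_num
      set ε := ((ζ - Z (k+1)) + (κ₁ - κ₂)) * Complex.exp (-(Z k)) with hε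
      have hεabs : ‖ε‖ ≤ (M + 1) * Real.exp (-(Z k).re) := by
        rw [hε, norm_mul, habse k]
        apply mul_le_mul_of_nonneg_right _ (Real.exp_pos _).le
        calc ‖(ζ - Z (k+1)) + (κ₁ - κ₂)‖
            ≤ ‖ζ - Z (k+1)‖ + ‖κ₁ - κ₂‖ := norm_add_le _ _
          _ ≤ M + 1 := by linarith
      have hεsmall : ‖ε‖ ≤ 1/100 := by
        have h1 := hexpw k
        calc ‖ε‖ ≤ (M+1) * Real.exp (-(Z k).re) := hεabs
          _ ≤ (M+1) * (1/(100*(M+1))) := by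
              apply mul_le_mul_of_nonneg_left h1 (by linarith)
          _ = 1/100 := by rw [mul_one_div, div_eq_iff (ne_of_gt hMpos)]; ring
      have hform : g k ζ - Z k = Complex.log (1 + ε) := by
        rw [hgdef]
        simp only [add_sub_cancel_left]
        rw [key k ζ, hε]
      rw [hform]
      have := Complex.norm_log_one_add_half_le_self (z := ε)
        (by linarith)
      calc ‖Complex.log (1 + ε)‖ ≤ (3/2) * ‖ε‖ := this
        _ ≤ (3/2) * ((M+1) * Real.exp (-(Z k).re)) := by
            apply mul_le_mul_of_nonneg_left hεabs (by norm_num)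
        _ ≤ 2 * (M + 1) * Real.exp (-(Z k).re) := by
            nlinarith [Real.exp_pos (-(Z k).re)]
  -- the log-difference contraction helper
  have logdiff : ∀ a b : ℂ, ‖a‖ ≤ 1/100 → ‖b‖ ≤ 1/100 →
      ‖Complex.log (1+b) - Complex.log (1+a)‖ ≤ 4 * ‖b - a‖ := by
    intro a b ha hb
    have habs1 : ∀ c : ℂ, ‖c‖ ≤ 1/100 → (99:ℝ)/100 ≤ ‖1 + c‖ := by
      intro c hc
      have := norm_add_le (1 + c) (-c)
      simp only [add_neg_cancel_right, norm_neg, norm_one] at this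
      linarith
    have h1a : (1 + a) ≠ 0 := by
      intro h
      have := habs1 a ha
      rw [h] at this; simp at this; linarith
    have h1b : (1 + b) ≠ 0 := by
      intro h
      have := habs1 b hb
      rw [h] at this; simp at this; linarith
    set dd := Complex.log (1+b) - Complex.log (1+a) with hdd
    have hlb := Complex.norm_log_one_add_half_le_self (z := b)
      (by linarith)
    have hla := Complex.norm_log_one_add_half_le_self (z := a)
      (by linarith)
    have hddsmall : ‖dd‖ ≤ 1/2 := by
      calc ‖dd‖ ≤ ‖Complex.log (1+b)‖ + ‖Complex.log (1+a)‖ :=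
            norm_sub_le _ _
        _ ≤ (3/2) * ‖b‖ + (3/2) * ‖a‖ := add_le_add hlb hla
        _ ≤ 1/2 := by linarith
    have hexpdd : Complex.exp dd = (1+b)/(1+a) := by
      rw [hdd, Complex.exp_sub, Complex.exp_log h1b, Complex.exp_log h1a]
    have hnum : ‖Complex.exp dd - 1‖ = ‖b - a‖ / ‖1+a‖ := by
      rw [hexpdd, div_sub_one h1a, norm_div]
      congr 2
      ring
    have hup : ‖Complex.exp dd - 1‖ ≤ 2 * ‖b - a‖ := by
      rw [hnum]
      have h99 := habs1 a ha
      rw [div_le_iff₀ (by linarith)]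
      nlinarith [norm_nonneg (b - a)]
    have hlow := abs_exp_sub_one_ge (d := dd) (by linarith)
    have : ‖dd‖ / 2 ≤ ‖dd‖ - ‖dd‖ ^ 2 := by
      nlinarith [norm_nonneg dd]
    linarith
  -- the epsilon functions and the formula for one pullback step
  set εf : ℕ → ℕ → ℂ := fun m k =>
    ((aux m (k+1) - Z (k+1)) + (κ₁ - κ₂)) * Complex.exp (-(Z k)) with hεf
  have hεfabs : ∀ m k, ‖εf m k‖ ≤ 1/100 := by
    intro m k
    have hd : ‖aux m (k+1) - Z (k+1)‖ ≤ 1 := by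
      calc ‖aux m (k+1) - Z (k+1)‖ ≤ 2 * (M+1) * Real.exp (-(Z (k+1)).re) :=
            bnd m (k+1)
        _ ≤ 1/50 := hsmall (k+1)
        _ ≤ 1 := by norm_num
    have h1 := hexpw k
    calc ‖εf m k‖
        = ‖(aux m (k+1) - Z (k+1)) + (κ₁ - κ₂)‖ * Real.exp (-(Z k).re) := by
          rw [hεf]; rw [norm_mul, habse k]
      _ ≤ (M + 1) * (1/(100*(M+1))) := by
          apply mul_le_mul _ h1 (Real.exp_pos _).le (by linarith)
          calc ‖(aux m (k+1) - Z (k+1)) + (κ₁ - κ₂)‖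
              ≤ ‖aux m (k+1) - Z (k+1)‖ + ‖κ₁ - κ₂‖ :=
                norm_add_le _ _
            _ ≤ M + 1 := by linarith
      _ = 1/100 := by rw [mul_one_div, div_eq_iff (ne_of_gt hMpos)]; ring
  have hform : ∀ m k, aux (m+1) k = Z k + Complex.log (1 + εf m k) := by
    intro m k
    rw [aux_succ, hgdef]
    simp only
    rw [key k (aux m (k+1)), hεf]
  -- contraction of successive approximants
  have ctr : ∀ m k, dist (aux (m+1) k) (aux (m+2) k) ≤
      (1/2) * dist (aux m (k+1)) (aux (m+1) (k+1)) := by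
    intro m k
    rw [Complex.dist_eq, Complex.dist_eq, hform m k, hform (m+1) k]
    have h1 : (Z k + Complex.log (1 + εf m k)) - (Z k + Complex.log (1 + εf (m+1) k)) =
        -(Complex.log (1 + εf (m+1) k) - Complex.log (1 + εf m k)) := by ring
    rw [h1, norm_neg]
    have h2 := logdiff (εf m k) (εf (m+1) k) (hεfabs m k) (hεfabs (m+1) k)
    have h3 : ‖εf (m+1) k - εf m k‖ =
        ‖aux (m+1) (k+1) - aux m (k+1)‖ * Real.exp (-(Z k).re) := by
      rw [hεf]
      simp only
      rw [show ((aux (m+1) (k+1) - Z (k+1)) + (κ₁ - κ₂)) * Complex.exp (-(Z k)) -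
          ((aux m (k+1) - Z (k+1)) + (κ₁ - κ₂)) * Complex.exp (-(Z k)) =
          (aux (m+1) (k+1) - aux m (k+1)) * Complex.exp (-(Z k)) by ring]
      rw [norm_mul, habse k]
    have h4 : ‖aux (m+1) (k+1) - aux m (k+1)‖ * Real.exp (-(Z k).re) ≤
        ‖aux (m+1) (k+1) - aux m (k+1)‖ * (1/(100*(M+1))) := by
      apply mul_le_mul_of_nonneg_left (hexpw k) (norm_nonneg _)
    have h5 : ‖aux m (k+1) - aux (m+1) (k+1)‖ =
        ‖aux (m+1) (k+1) - aux m (k+1)‖ := norm_sub_rev _ _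
    rw [h5]
    have hMbig : 8 * (1/(100*(M+1))) ≤ 1 := by
      rw [mul_one_div, div_le_one (by linarith)]; linarith
    nlinarith [norm_nonneg (aux (m+1) (k+1) - aux m (k+1)), h2, h3, h4]
  -- geometric bound on successive distances
  have Ds : ∀ m k, dist (aux m k) (aux (m+1) k) ≤ (1/50) * (1/2)^m := by
    intro m
    induction m with
    | zero =>
      intro k
      rw [Complex.dist_eq, aux_zero, norm_sub_rev]
      calc ‖aux 1 k - Z k‖ ≤ 2 * (M+1) * Real.exp (-(Z k).re) := bnd 1 k
        _ ≤ 1/50 := hsmall k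
        _ = (1/50) * (1/2)^0 := by norm_num
    | succ n ih =>
      intro k
      calc dist (aux (n+1) k) (aux (n+2) k) ≤ (1/2) * dist (aux n (k+1)) (aux (n+1) (k+1)) :=
            ctr n k
        _ ≤ (1/2) * ((1/50) * (1/2)^n) := by
            apply mul_le_mul_of_nonneg_left (ih (k+1)) (by norm_num)
        _ = (1/50) * (1/2)^(n+1) := by ring
  -- convergence
  have hconv : ∀ k, ∃ l, Tendsto (fun m => aux m k) atTop (𝓝 l) := by
    intro k
    apply cauchySeq_tendsto_of_complete
    exact cauchySeq_of_le_geometric (1/2) (1/50) (by norm_num) (fun n => Ds n k)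
  choose w hw using hconv
  -- the limit orbit shadows Z
  have hwZ : ∀ k, ‖w k - Z k‖ ≤ 2 * (M+1) * Real.exp (-(Z k).re) := by
    intro k
    have h1 : Tendsto (fun m => ‖aux m k - Z k‖) atTop
        (𝓝 (‖w k - Z k‖)) :=
      (continuous_norm.tendsto _).comp ((hw k).sub_const (Z k))
    exact le_of_tendsto h1 (Filter.Eventually.of_forall (fun m => bnd m k))
  -- the limit is an orbit of Eexp κ₂
  have hE : ∀ m k, Eexp κ₂ (aux (m+1) k) = aux m (k+1) := by
    intro m k
    have hne : (1 : ℂ) + εf m k ≠ 0 := by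
      intro h
      have h2 := hεfabs m k
      have h3 : ‖1 + εf m k‖ = 0 := by rw [h]; simp
      have h4 : (99:ℝ)/100 ≤ ‖1 + εf m k‖ := by
        have := norm_add_le (1 + εf m k) (-(εf m k))
        simp only [add_neg_cancel_right, norm_neg, norm_one] at this
        linarith
      rw [h3] at h4; linarith
    rw [hform m k]
    unfold Eexp
    rw [Complex.exp_add, Complex.exp_log hne]
    have he : Complex.exp (Z k) * Complex.exp (-(Z k)) = 1 := by
      rw [← Complex.exp_add]; simp
    rw [hεf]
    simp only
    have hZ := hZsucc k
    linear_combination (aux m (k+1) - Z (k+1) + (κ₁ - κ₂)) * he - hZsucc k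
  have hwE : ∀ k, Eexp κ₂ (w k) = w (k+1) := by
    intro k
    have h1 : Tendsto (fun m : ℕ => aux (m+1) k) atTop (𝓝 (w k)) :=
      (tendsto_add_atTop_iff_nat 1).mpr (hw k)
    have h2 : Tendsto (fun m : ℕ => Eexp κ₂ (aux (m+1) k)) atTop (𝓝 (Eexp κ₂ (w k))) := by
      have hcont : Continuous (Eexp κ₂) := by
        unfold Eexp; exact Complex.continuous_exp.add continuous_const
      exact (hcont.tendsto _).comp h1
    have h3 : Tendsto (fun m : ℕ => aux m (k+1)) atTop (𝓝 (w (k+1))) := hw (k+1)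
    have h4 : (fun m : ℕ => Eexp κ₂ (aux (m+1) k)) = fun m : ℕ => aux m (k+1) := by
      funext m; exact hE m k
    rw [h4] at h2
    exact tendsto_nhds_unique h2 h3
  have hiter : ∀ k, (Eexp κ₂)^[k] (w 0) = w k := by
    intro k
    induction k with
    | zero => rfl
    | succ n ih => rw [Function.iterate_succ_apply', ih, hwE n]
  -- the limit escapes
  have hre : Tendsto (fun k : ℕ => (Z k).re) atTop atTop := re_tendsto hz
  have hesc : w 0 ∈ escapingSet κ₂ := by
    have hlow : ∀ k, (Z k).re - 1 ≤ ‖(Eexp κ₂)^[k] (w 0)‖ := by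
      intro k
      rw [hiter k]
      have h1 : ‖Z k‖ ≤ ‖w k‖ + ‖Z k - w k‖ := by
        have := norm_add_le (w k) (Z k - w k)
        simpa using this
      have h2 : ‖Z k - w k‖ ≤ 1 := by
        rw [norm_sub_rev]
        calc ‖w k - Z k‖ ≤ 2 * (M+1) * Real.exp (-(Z k).re) := hwZ k
          _ ≤ 1/50 := hsmall k
          _ ≤ 1 := by norm_num
      have h3 := Complex.re_le_norm (Z k)
      linarith
    apply tendsto_atTop_mono hlow
    exact tendsto_atTop_add_const_right atTop (-1) hre
  refine ⟨w 0, hesc, ?_⟩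
  have hbound : ∀ k : ℕ, ‖Z k - (Eexp κ₂)^[k] (w 0)‖ ≤
      2 * (M+1) * Real.exp (-(Z k).re) := by
    intro k
    rw [hiter k, norm_sub_rev]
    exact hwZ k
  have htends : Tendsto (fun k : ℕ => 2 * (M+1) * Real.exp (-(Z k).re)) atTop (𝓝 0) := by
    have h1 : Tendsto (fun k : ℕ => Real.exp (-(Z k).re)) atTop (𝓝 0) :=
      Real.tendsto_exp_neg_atTop_nhds_zero.comp hre
    simpa using h1.const_mul (2 * (M+1))
  exact squeeze_zero (fun k => norm_nonneg _) hbound htends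

end Rig

namespace Rig

lemma pb_mem_escaping {κ v : ℂ} (hv : v ∈ escapingSet κ) (hκ : κ ∉ escapingSet κ) (n : ℤ) :
    pb κ v n ∈ escapingSet κ := by
  rw [← mem_escaping_iff_apply, pb_exp (escaping_ne_singular hv hκ) n]
  exact hv

/-- Every escaping point of `E_{κ₁}` has an asymptotic partner escaping under
`E_{κ₂}`, provided `κ₂` does not escape. -/
lemma shadow_exists (κ₁ κ₂ : ℂ) (h₂ : κ₂ ∉ escapingSet κ₂) {z : ℂ}
    (hz : z ∈ escapingSet κ₁) :
    ∃ w ∈ escapingSet κ₂,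
      Tendsto (fun k : ℕ => ‖(Eexp κ₁)^[k] z - (Eexp κ₂)^[k] w‖)
        atTop (𝓝 0) := by
  obtain ⟨K, hK⟩ := ((re_tendsto hz).eventually_ge_atTop (Rc κ₁ κ₂)).exists_forall_of_atTop
  set z' := (Eexp κ₁)^[K] z with hz'
  have hz'mem : z' ∈ escapingSet κ₁ := (iterate_mem_escaping_iff K).mpr hz
  have hz'R : ∀ k : ℕ, Rc κ₁ κ₂ ≤ ((Eexp κ₁)^[k] z').re := by
    intro k
    rw [hz', ← Function.iterate_add_apply]
    exact hK (k + K) (Nat.le_add_left _ _)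
  obtain ⟨w', hw'mem, hw'sh⟩ := shadow_tail κ₁ κ₂ hz'mem hz'R
  -- pull w' back K times
  set u : ℕ → ℂ := fun n => (fun v => pb κ₂ v 0)^[n] w' with hu
  have humem : ∀ n, u n ∈ escapingSet κ₂ := by
    intro n
    induction n with
    | zero => exact hw'mem
    | succ m ih =>
      have hst : u (m+1) = pb κ₂ (u m) 0 := Function.iterate_succ_apply' _ _ _
      rw [hst]
      exact pb_mem_escaping ih h₂ 0
  have huiter : ∀ n, (Eexp κ₂)^[n] (u n) = w' := by
    intro n
    induction n with
    | zero => rfl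
    | succ m ih =>
      rw [Function.iterate_succ_apply]
      have : u (m+1) = pb κ₂ (u m) 0 := Function.iterate_succ_apply' _ _ _
      rw [this, pb_exp (escaping_ne_singular (humem m) h₂) 0]
      exact ih
  refine ⟨u K, humem K, ?_⟩
  rw [← tendsto_add_atTop_iff_nat K]
  have heq : (fun k : ℕ => ‖(Eexp κ₁)^[k + K] z - (Eexp κ₂)^[k + K] (u K)‖) =
      fun k : ℕ => ‖(Eexp κ₁)^[k] z' - (Eexp κ₂)^[k] w'‖ := by
    funext k
    rw [Function.iterate_add_apply, Function.iterate_add_apply, huiter K, hz']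
  rw [heq]
  exact hw'sh

end Rig

namespace Rig

/-- grand orbit equivalence -/
def gr (κ : ℂ) (u v : ℂ) : Prop := ∃ m n : ℕ, (Eexp κ)^[m] u = (Eexp κ)^[n] v

lemma gr_refl (κ u : ℂ) : gr κ u u := ⟨0, 0, rfl⟩

lemma gr_symm {κ u v : ℂ} (h : gr κ u v) : gr κ v u := by
  obtain ⟨m, n, h⟩ := h; exact ⟨n, m, h.symm⟩

lemma gr_trans {κ u v w : ℂ} (h : gr κ u v) (h' : gr κ v w) : gr κ u w := by
  obtain ⟨m, n, h⟩ := h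
  obtain ⟨m', n', h'⟩ := h'
  refine ⟨m' + m, n + n', ?_⟩
  rw [Function.iterate_add_apply, h, ← Function.iterate_add_apply, add_comm m',
    Function.iterate_add_apply, h', ← Function.iterate_add_apply, add_comm n]

def grS (κ : ℂ) : Setoid ℂ := ⟨gr κ, ⟨fun u => gr_refl κ u, gr_symm, gr_trans⟩⟩

/-- representative of the grand orbit -/
def repc (κ : ℂ) (u : ℂ) : ℂ := (@Quotient.mk ℂ (grS κ) u).out

lemma repc_rel (κ u : ℂ) : gr κ (repc κ u) u := @Quotient.mk_out ℂ (grS κ) u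

lemma repc_congr {κ u v : ℂ} (h : gr κ u v) : repc κ u = repc κ v := by
  unfold repc
  congr 1
  exact Quotient.sound h

lemma gr_mem_escaping {κ u v : ℂ} (h : gr κ u v) (hv : v ∈ escapingSet κ) :
    u ∈ escapingSet κ := by
  obtain ⟨m, n, h⟩ := h
  have : (Eexp κ)^[n] v ∈ escapingSet κ := (iterate_mem_escaping_iff n).mpr hv
  rw [← h] at this
  exact (iterate_mem_escaping_iff m).mp this

lemma repc_mem_escaping {κ u : ℂ} (hu : u ∈ escapingSet κ) : repc κ u ∈ escapingSet κ :=
  gr_mem_escaping (repc_rel κ u) hu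

lemma gr_apply (κ u : ℂ) : gr κ (Eexp κ u) u := ⟨0, 1, rfl⟩

/-- iterates at distinct times are distinct on escaping orbits -/
lemma iterate_inj {κ z : ℂ} (hz : z ∈ escapingSet κ) {p q : ℕ}
    (h : (Eexp κ)^[p] z = (Eexp κ)^[q] z) : p = q := by
  by_contra hne
  rcases Nat.lt_or_ge p q with hlt | hge
  · have : (Eexp κ)^[q - p] ((Eexp κ)^[p] z) = (Eexp κ)^[p] z := by
      rw [← Function.iterate_add_apply, Nat.sub_add_cancel hlt.le, ← h]
    exact not_periodic ((iterate_mem_escaping_iff p).mpr hz) (by omega) this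
  · have hlt : q < p := lt_of_le_of_ne hge (Ne.symm hne)
    have : (Eexp κ)^[p - q] ((Eexp κ)^[q] z) = (Eexp κ)^[q] z := by
      rw [← Function.iterate_add_apply, Nat.sub_add_cancel hlt.le, h]
    exact not_periodic ((iterate_mem_escaping_iff q).mpr hz) (by omega) this

/-- A full (bi-infinite) orbit through `z`. -/
def fullOrbit (κ z : ℂ) : ℤ → ℂ
  | .ofNat n => (Eexp κ)^[n] z
  | .negSucc n => (fun v => pb κ v 0)^[n+1] z

lemma fo_ofNat (κ z : ℂ) (n : ℕ) : fullOrbit κ z (n : ℤ) = (Eexp κ)^[n] z := rfl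

lemma fo_zero (κ z : ℂ) : fullOrbit κ z 0 = z := rfl

lemma fo_bw_mem {κ z : ℂ} (hz : z ∈ escapingSet κ) (hκ : κ ∉ escapingSet κ) (n : ℕ) :
    (fun v => pb κ v 0)^[n] z ∈ escapingSet κ := by
  induction n with
  | zero => exact hz
  | succ m ih =>
    have hst : (fun v => pb κ v 0)^[m+1] z = pb κ ((fun v => pb κ v 0)^[m] z) 0 :=
      Function.iterate_succ_apply' _ _ _
    rw [hst]
    exact pb_mem_escaping ih hκ 0

lemma fo_mem {κ z : ℂ} (hz : z ∈ escapingSet κ) (hκ : κ ∉ escapingSet κ) (j : ℤ) :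
    fullOrbit κ z j ∈ escapingSet κ := by
  cases j with
  | ofNat n => exact (iterate_mem_escaping_iff n).mpr hz
  | negSucc n => exact fo_bw_mem hz hκ (n+1)

lemma fo_step {κ z : ℂ} (hz : z ∈ escapingSet κ) (hκ : κ ∉ escapingSet κ) (j : ℤ) :
    Eexp κ (fullOrbit κ z j) = fullOrbit κ z (j + 1) := by
  cases j with
  | ofNat n =>
    show Eexp κ ((Eexp κ)^[n] z) = fullOrbit κ z ((n : ℤ) + 1)
    have : ((n : ℤ) + 1) = ((n + 1 : ℕ) : ℤ) := by push_cast; ring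
    rw [this, fo_ofNat, Function.iterate_succ_apply']
  | negSucc n =>
    cases n with
    | zero =>
      show Eexp κ (pb κ z 0) = fullOrbit κ z (Int.negSucc 0 + 1)
      have h0 : (Int.negSucc 0 + 1) = (0 : ℤ) := by decide
      rw [h0, fo_zero]
      exact pb_exp (escaping_ne_singular hz hκ) 0
    | succ m =>
      have h0 : (Int.negSucc (m+1) + 1) = Int.negSucc m := by
        rw [Int.negSucc_eq, Int.negSucc_eq]; push_cast; ring
      rw [h0]
      show Eexp κ ((fun v => pb κ v 0)^[m+2] z) = (fun v => pb κ v 0)^[m+1] z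
      have hst : (fun v => pb κ v 0)^[m+2] z = pb κ ((fun v => pb κ v 0)^[m+1] z) 0 :=
        Function.iterate_succ_apply' _ _ _
      rw [hst]
      exact pb_exp (escaping_ne_singular (fo_bw_mem hz hκ (m+1)) hκ) 0

lemma fo_iter {κ z : ℂ} (hz : z ∈ escapingSet κ) (hκ : κ ∉ escapingSet κ) (j : ℤ) (t : ℕ) :
    (Eexp κ)^[t] (fullOrbit κ z j) = fullOrbit κ z (j + t) := by
  induction t with
  | zero => simp
  | succ m ih =>
    rw [Function.iterate_succ_apply', ih, fo_step hz hκ]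
    congr 1
    push_cast
    ring

lemma fo_inj {κ z : ℂ} (hz : z ∈ escapingSet κ) (hκ : κ ∉ escapingSet κ) {a b : ℤ}
    (h : fullOrbit κ z a = fullOrbit κ z b) : a = b := by
  have ht : (((a.natAbs + b.natAbs : ℕ)) : ℤ) = (a.natAbs : ℤ) + (b.natAbs : ℤ) := by push_cast; ring
  set t : ℕ := (a.natAbs + b.natAbs) with htd
  have hat : 0 ≤ a + (t : ℤ) := by rw [htd, ht]; omega
  have hbt : 0 ≤ b + (t : ℤ) := by rw [htd, ht]; omega
  have h1 : fullOrbit κ z (a + t) = fullOrbit κ z (b + t) := by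
    rw [← fo_iter hz hκ a t, ← fo_iter hz hκ b t, h]
  have h2 : ((a + t).toNat : ℤ) = a + t := Int.toNat_of_nonneg hat
  have h3 : ((b + t).toNat : ℤ) = b + t := Int.toNat_of_nonneg hbt
  rw [← h2, ← h3, fo_ofNat, fo_ofNat] at h1
  have := iterate_inj hz h1
  omega

end Rig

namespace Rig

/-- labelled pullback chain: pull `t` back `m` times with strip labels `l 0, …, l (m-1)` -/
def chainB (κ : ℂ) (t : ℂ) : ℕ → (ℕ → ℤ) → ℂ
  | 0, _ => t
  | (m+1), l => pb κ (chainB κ t m (fun k => l (k+1))) (l 0)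

lemma chainB_mem {κ t : ℂ} (ht : t ∈ escapingSet κ) (hκ : κ ∉ escapingSet κ) :
    ∀ (m : ℕ) (l : ℕ → ℤ), chainB κ t m l ∈ escapingSet κ := by
  intro m
  induction m with
  | zero => intro l; exact ht
  | succ n ih =>
    intro l
    show pb κ (chainB κ t n (fun k => l (k+1))) (l 0) ∈ escapingSet κ
    exact pb_mem_escaping (ih _) hκ _

lemma chainB_apply {κ t : ℂ} (ht : t ∈ escapingSet κ) (hκ : κ ∉ escapingSet κ)
    (m : ℕ) (l : ℕ → ℤ) :
    Eexp κ (chainB κ t (m+1) l) = chainB κ t m (fun k => l (k+1)) := by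
  show Eexp κ (pb κ (chainB κ t m (fun k => l (k+1))) (l 0)) = _
  exact pb_exp (escaping_ne_singular (chainB_mem ht hκ m _) hκ) _

lemma chainB_iter {κ t : ℂ} (ht : t ∈ escapingSet κ) (hκ : κ ∉ escapingSet κ) :
    ∀ (m : ℕ) (l : ℕ → ℤ), (Eexp κ)^[m] (chainB κ t m l) = t := by
  intro m
  induction m with
  | zero => intro l; rfl
  | succ n ih =>
    intro l
    rw [Function.iterate_succ_apply, chainB_apply ht hκ n l]
    exact ih _

lemma chainB_lab {κ t : ℂ} (ht : t ∈ escapingSet κ) (hκ : κ ∉ escapingSet κ) :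
    ∀ (m : ℕ) (l : ℕ → ℤ) (k : ℕ), k < m →
      lab ((Eexp κ)^[k] (chainB κ t m l)) = l k := by
  intro m
  induction m with
  | zero => intro l k hk; omega
  | succ n ih =>
    intro l k hk
    cases k with
    | zero =>
      show lab (chainB κ t (n+1) l) = l 0
      exact pb_lab κ _ _
    | succ j =>
      rw [Function.iterate_succ_apply, chainB_apply ht hκ n l]
      exact ih _ j (by omega)

lemma chainB_succ_top (κ t : ℂ) :
    ∀ (m : ℕ) (l : ℕ → ℤ), chainB κ t (m+1) l = chainB κ (pb κ t (l m)) m l := by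
  intro m
  induction m with
  | zero => intro l; rfl
  | succ n ih =>
    intro l
    show pb κ (chainB κ t (n+1) (fun k => l (k+1))) (l 0) = _
    rw [ih (fun k => l (k+1))]
    rfl

/-- points with the same `m`-th iterate and the same labels along the way coincide -/
lemma descend (κ : ℂ) :
    ∀ (m : ℕ) (a b : ℂ), (Eexp κ)^[m] a = (Eexp κ)^[m] b →
      (∀ k, k < m → lab ((Eexp κ)^[k] a) = lab ((Eexp κ)^[k] b)) → a = b := by
  intro m
  induction m with
  | zero => intro a b h _; exact h
  | succ n ih =>
    intro a b h hl
    have h1 : Eexp κ a = Eexp κ b := by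
      apply ih
      · rw [← Function.iterate_succ_apply, ← Function.iterate_succ_apply]
        exact h
      · intro k hk
        rw [← Function.iterate_succ_apply, ← Function.iterate_succ_apply]
        exact hl (k+1) (by omega)
    have h2 : Complex.exp a = Complex.exp b := by
      have : Complex.exp a + κ = Complex.exp b + κ := h1
      linear_combination this
    exact eq_of_exp_eq_of_lab_eq h2 (hl 0 (by omega))

end Rig

open Rig in
/-- If neither singular value escapes, then there is a bijection between the escaping sets
of `E_{κ₁}` and `E_{κ₂}` which conjugates the dynamics and keeps orbits asymptotically
together. -/
theorem exp_escaping_bijection (κ₁ κ₂ : ℂ)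
    (h₁ : κ₁ ∉ escapingSet κ₁) (h₂ : κ₂ ∉ escapingSet κ₂) :
    ∃ Φ : ℂ → ℂ, Set.BijOn Φ (escapingSet κ₁) (escapingSet κ₂) ∧
      ∀ z ∈ escapingSet κ₁,
        Φ (Eexp κ₁ z) = Eexp κ₂ (Φ z) ∧
        Tendsto (fun n : ℕ => ‖(Eexp κ₁)^[n] z - (Eexp κ₂)^[n] (Φ z)‖)
          atTop (𝓝 0) := by
  classical
  -- asymptotic partner functions in both directions
  have hPex : ∀ u : ℂ, ∃ w : ℂ, u ∈ escapingSet κ₁ →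
      w ∈ escapingSet κ₂ ∧ Tendsto (fun k : ℕ =>
        ‖(Eexp κ₁)^[k] u - (Eexp κ₂)^[k] w‖) atTop (𝓝 0) := by
    intro u
    by_cases hu : u ∈ escapingSet κ₁
    · obtain ⟨w, hw1, hw2⟩ := shadow_exists κ₁ κ₂ h₂ hu
      exact ⟨w, fun _ => ⟨hw1, hw2⟩⟩
    · exact ⟨0, fun h => absurd h hu⟩
  choose P hP using hPex
  have hQex : ∀ v : ℂ, ∃ w : ℂ, v ∈ escapingSet κ₂ →
      w ∈ escapingSet κ₁ ∧ Tendsto (fun k : ℕ =>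
        ‖(Eexp κ₂)^[k] v - (Eexp κ₁)^[k] w‖) atTop (𝓝 0) := by
    intro v
    by_cases hv : v ∈ escapingSet κ₂
    · obtain ⟨w, hw1, hw2⟩ := shadow_exists κ₂ κ₁ h₁ hv
      exact ⟨w, fun _ => ⟨hw1, hw2⟩⟩
    · exact ⟨0, fun h => absurd h hv⟩
  choose Q hQ using hQex
  -- per-class reference orbits
  set Zf : ℂ → ℤ → ℂ := fun u => fullOrbit κ₁ (repc κ₁ u) with hZfdef
  set Wf : ℂ → ℤ → ℂ := fun u => fullOrbit κ₂ (P (repc κ₁ u)) with hWfdef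
  -- witnesses for membership in the class
  have hWit : ∀ u : ℂ, ∃ m n : ℕ, u ∈ escapingSet κ₁ →
      (Eexp κ₁)^[m] u = (Eexp κ₁)^[n] (repc κ₁ u) := by
    intro u
    obtain ⟨n, m, h⟩ := repc_rel κ₁ u
    exact ⟨m, n, fun _ => h.symm⟩
  choose mw nw hmn using hWit
  set J : ℂ → ℤ := fun u => (nw u : ℤ) - (mw u : ℤ) with hJdef
  -- membership facts
  have hrepmem : ∀ u, u ∈ escapingSet κ₁ → repc κ₁ u ∈ escapingSet κ₁ :=
    fun u hu => repc_mem_escaping hu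
  have hZfmem : ∀ u, u ∈ escapingSet κ₁ → ∀ j, Zf u j ∈ escapingSet κ₁ :=
    fun u hu j => fo_mem (hrepmem u hu) h₁ j
  have hPmem : ∀ u, u ∈ escapingSet κ₁ → P (repc κ₁ u) ∈ escapingSet κ₂ :=
    fun u hu => (hP _ (hrepmem u hu)).1
  have hWfmem : ∀ u, u ∈ escapingSet κ₁ → ∀ j, Wf u j ∈ escapingSet κ₂ :=
    fun u hu j => fo_mem (hPmem u hu) h₂ j
  -- the orbit of u eventually agrees with the reference orbit
  have hvalid : ∀ u, u ∈ escapingSet κ₁ → ∀ t : ℕ, mw u ≤ t →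
      (Eexp κ₁)^[t] u = Zf u (J u + t) := by
    intro u hu t ht
    calc (Eexp κ₁)^[t] u = (Eexp κ₁)^[(t - mw u) + mw u] u := by
          rw [Nat.sub_add_cancel ht]
      _ = (Eexp κ₁)^[t - mw u] ((Eexp κ₁)^[mw u] u) := Function.iterate_add_apply _ _ _ _
      _ = (Eexp κ₁)^[t - mw u] ((Eexp κ₁)^[nw u] (repc κ₁ u)) := by rw [hmn u hu]
      _ = (Eexp κ₁)^[(t - mw u) + nw u] (repc κ₁ u) :=
          (Function.iterate_add_apply _ _ _ _).symm
      _ = Zf u (J u + t) := by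
          rw [← fo_ofNat κ₁ (repc κ₁ u) ((t - mw u) + nw u)]
          show fullOrbit κ₁ (repc κ₁ u) _ = fullOrbit κ₁ (repc κ₁ u) _
          congr 1
          simp only [hJdef]
          omega
  -- uniqueness of the index
  have hJuniq : ∀ u, u ∈ escapingSet κ₁ → ∀ (a : ℕ) (i : ℤ),
      (Eexp κ₁)^[a] u = Zf u (i + a) → i = J u := by
    intro u hu a i ha
    have hb := hvalid u hu (mw u) le_rfl
    have e1 : (Eexp κ₁)^[mw u + a] u = Zf u (i + a + mw u) := by
      rw [Function.iterate_add_apply, ha]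
      show (Eexp κ₁)^[mw u] (fullOrbit κ₁ (repc κ₁ u) (i + a)) = _
      rw [fo_iter (hrepmem u hu) h₁]
    have e2 : (Eexp κ₁)^[mw u + a] u = Zf u (J u + mw u + a) := by
      rw [show mw u + a = a + mw u by omega, Function.iterate_add_apply, hb]
      show (Eexp κ₁)^[a] (fullOrbit κ₁ (repc κ₁ u) (J u + mw u)) = _
      rw [fo_iter (hrepmem u hu) h₁]
    have := fo_inj (hrepmem u hu) h₁ (e1.symm.trans e2 :
      fullOrbit κ₁ (repc κ₁ u) (i + a + mw u) = fullOrbit κ₁ (repc κ₁ u) (J u + mw u + a))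
    omega
  -- transported labels
  set lu : ℂ → ℕ → ℤ := fun u k =>
    lab ((Eexp κ₁)^[k] u) - lab (Zf u (J u + k)) + lab (Wf u (J u + k)) with hludef
  -- the conjugacy
  set Φ : ℂ → ℂ := fun u =>
    if u ∈ escapingSet κ₁ then chainB κ₂ (Wf u (J u + mw u)) (mw u) (lu u) else u
    with hΦdef
  -- coherence: any sufficiently long chain computes Φ
  have hcoh : ∀ u, u ∈ escapingSet κ₁ → ∀ t, mw u ≤ t →
      chainB κ₂ (Wf u (J u + t)) t (lu u) = Φ u := by
    intro u hu t ht
    induction t, ht using Nat.le_induction with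
    | base =>
      rw [hΦdef]
      simp only [if_pos hu]
    | succ t ht ih =>
      rw [← ih, chainB_succ_top]
      congr 1
      apply pb_unique
      · show Eexp κ₂ (fullOrbit κ₂ (P (repc κ₁ u)) (J u + t)) = _
        rw [fo_step (hPmem u hu) h₂]
        congr 1
        push_cast
        ring
      · have hv := hvalid u hu t ht
        rw [hludef]
        simp only
        rw [hv]
        omega
  -- basic properties of Φ
  have hΦmem : ∀ u, u ∈ escapingSet κ₁ → Φ u ∈ escapingSet κ₂ := by
    intro u hu
    rw [hΦdef]
    simp only [if_pos hu]
    exact chainB_mem (hWfmem u hu _) h₂ _ _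
  have hΦiter : ∀ u, u ∈ escapingSet κ₁ → ∀ t, mw u ≤ t →
      (Eexp κ₂)^[t] (Φ u) = Wf u (J u + t) := by
    intro u hu t ht
    rw [← hcoh u hu t ht]
    exact chainB_iter (hWfmem u hu _) h₂ t _
  have hΦlab : ∀ u, u ∈ escapingSet κ₁ → ∀ k, lab ((Eexp κ₂)^[k] (Φ u)) = lu u k := by
    intro u hu k
    have hT : mw u ≤ max (mw u) (k+1) := le_max_left _ _
    rw [← hcoh u hu (max (mw u) (k+1)) hT]
    exact chainB_lab (hWfmem u hu _) h₂ _ _ k (by omega)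
  -- conjugacy
  have hconj : ∀ u, u ∈ escapingSet κ₁ → Φ (Eexp κ₁ u) = Eexp κ₂ (Φ u) := by
    intro u hu
    have huE : Eexp κ₁ u ∈ escapingSet κ₁ := mem_escaping_iff_apply.mpr hu
    have hrepE : repc κ₁ (Eexp κ₁ u) = repc κ₁ u := repc_congr (gr_apply κ₁ u)
    have hZfE : Zf (Eexp κ₁ u) = Zf u := by rw [hZfdef]; simp only [hrepE]
    have hWfE : Wf (Eexp κ₁ u) = Wf u := by rw [hWfdef]; simp only [hrepE]
    have hJE : J (Eexp κ₁ u) = J u + 1 := by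
      refine (hJuniq (Eexp κ₁ u) huE (mw u + 1) (J u + 1) ?_).symm
      have h1 : (Eexp κ₁)^[mw u + 1] (Eexp κ₁ u) = (Eexp κ₁)^[mw u + 1 + 1] u := by
        rw [← Function.iterate_succ_apply]
      rw [h1, hvalid u hu (mw u + 1 + 1) (by omega), hZfE]
      congr 1
      push_cast
      ring
    have hlE : lu (Eexp κ₁ u) = fun k => lu u (k+1) := by
      funext k
      rw [hludef]
      simp only [hZfE, hWfE, hJE]
      have h1 : (Eexp κ₁)^[k] (Eexp κ₁ u) = (Eexp κ₁)^[k+1] u := by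
        rw [← Function.iterate_succ_apply]
      rw [h1]
      have h2 : J u + 1 + (k : ℤ) = J u + ((k : ℕ) + 1 : ℕ) := by push_cast; ring
      rw [h2]
    set T := max (mw u + 1) (mw (Eexp κ₁ u)) with hTdef
    have hT1 : mw (Eexp κ₁ u) ≤ T := le_max_right _ _
    have hT2 : mw u ≤ T + 1 := by omega
    rw [← hcoh (Eexp κ₁ u) huE T hT1, ← hcoh u hu (T+1) hT2]
    rw [chainB_apply (hWfmem u hu _) h₂ T (lu u)]
    rw [hWfE, hJE, hlE]
    congr 1
    push_cast
    ring
  -- shadowing of the reference orbits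
  have hshZ : ∀ u, u ∈ escapingSet κ₁ →
      Tendsto (fun k : ℕ => ‖Zf u (k : ℤ) - Wf u (k : ℤ)‖) atTop (𝓝 0) := by
    intro u hu
    apply ((hP (repc κ₁ u) (hrepmem u hu)).2).congr
    intro k
    rw [hZfdef, hWfdef]
    simp only [fo_ofNat]
  have hshift : ∀ u, u ∈ escapingSet κ₁ → ∀ c : ℤ, 0 ≤ c →
      Tendsto (fun s : ℕ => ‖Zf u (c + s) - Wf u (c + s)‖) atTop (𝓝 0) := by
    intro u hu c hc
    have hmap : Tendsto (fun s : ℕ => (c + s).toNat) atTop atTop := by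
      rw [tendsto_atTop]
      intro b
      rw [eventually_atTop]
      exact ⟨b, fun k hk => by omega⟩
    apply ((hshZ u hu).comp hmap).congr
    intro s
    simp only [Function.comp_apply]
    have h1 : (((c + s).toNat : ℕ) : ℤ) = c + s := by omega
    rw [h1]
  -- asymptotics
  have hasymp : ∀ u, u ∈ escapingSet κ₁ →
      Tendsto (fun k : ℕ => ‖(Eexp κ₁)^[k] u - (Eexp κ₂)^[k] (Φ u)‖)
        atTop (𝓝 0) := by
    intro u hu
    have hsh' := hshZ u hu
    have hmap : Tendsto (fun k : ℕ => (J u + k).toNat) atTop atTop := by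
      rw [tendsto_atTop]
      intro b
      rw [eventually_atTop]
      have hJmw : 0 ≤ J u + mw u := by simp only [hJdef]; omega
      exact ⟨b + (J u).natAbs + mw u, fun k hk => by omega⟩
    have htarget : Tendsto (fun k : ℕ =>
        ‖Zf u (J u + k) - Wf u (J u + k)‖) atTop (𝓝 0) := by
      apply (hsh'.comp hmap).congr'
      rw [Filter.EventuallyEq, eventually_atTop]
      refine ⟨mw u, fun k hk => ?_⟩
      have h0 : (0:ℤ) ≤ J u + k := by simp only [hJdef]; omega
      have h1 : ((J u + k).toNat : ℤ) = J u + k := by omega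
      simp only [Function.comp_apply]
      rw [h1]
    apply htarget.congr'
    rw [Filter.EventuallyEq, eventually_atTop]
    refine ⟨mw u, fun k hk => ?_⟩
    rw [hvalid u hu k hk, hΦiter u hu k hk]
  -- injectivity
  have hinj : Set.InjOn Φ (escapingSet κ₁) := by
    intro u hu u' hu' heq
    have ht1 : mw u ≤ max (mw u) (mw u') := le_max_left _ _
    have ht2 : mw u' ≤ max (mw u) (mw u') := le_max_right _ _
    set t := max (mw u) (mw u') with htdef
    have e1 : (Eexp κ₂)^[t] (Φ u) = Wf u (J u + t) := hΦiter u hu t ht1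
    have e2 : (Eexp κ₂)^[t] (Φ u') = Wf u' (J u' + t) := hΦiter u' hu' t ht2
    have key : Wf u (J u + t) = Wf u' (J u' + t) := by rw [← e1, ← e2, heq]
    have hnn : 0 ≤ J u + t := by simp only [hJdef]; omega
    have hnn' : 0 ≤ J u' + t := by simp only [hJdef]; omega
    set pN := (J u + t).toNat with hpNdef
    set qN := (J u' + t).toNat with hqNdef
    have hp : (pN : ℤ) = J u + t := Int.toNat_of_nonneg hnn
    have hq : (qN : ℤ) = J u' + t := Int.toNat_of_nonneg hnn'
    set A := (Eexp κ₁)^[pN] (repc κ₁ u) with hAdef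
    set B := (Eexp κ₁)^[qN] (repc κ₁ u') with hBdef
    have hAZ : A = Zf u (J u + t) := by
      rw [hAdef, ← fo_ofNat κ₁ (repc κ₁ u) pN, hp]
    have hBZ : B = Zf u' (J u' + t) := by
      rw [hBdef, ← fo_ofNat κ₁ (repc κ₁ u') qN, hq]
    have hAmem : A ∈ escapingSet κ₁ := (iterate_mem_escaping_iff pN).mpr (hrepmem u hu)
    have hiterA : ∀ s : ℕ, (Eexp κ₁)^[s] A = Zf u (J u + t + s) := by
      intro s
      rw [hAZ]
      exact fo_iter (hrepmem u hu) h₁ _ s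
    have hiterB : ∀ s : ℕ, (Eexp κ₁)^[s] B = Zf u' (J u' + t + s) := by
      intro s
      rw [hBZ]
      exact fo_iter (hrepmem u' hu') h₁ _ s
    have hWeq : ∀ s : ℕ, Wf u (J u + t + s) = Wf u' (J u' + t + s) := by
      intro s
      have hw1 : (Eexp κ₂)^[s] (Wf u (J u + t)) = Wf u (J u + t + s) :=
        fo_iter (hPmem u hu) h₂ _ s
      have hw2 : (Eexp κ₂)^[s] (Wf u' (J u' + t)) = Wf u' (J u' + t + s) :=
        fo_iter (hPmem u' hu') h₂ _ s
      rw [← hw1, ← hw2, key]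
    have hAB : Tendsto (fun s : ℕ =>
        ‖(Eexp κ₁)^[s] A - (Eexp κ₁)^[s] B‖) atTop (𝓝 0) := by
      have T1 := hshift u hu (J u + t) hnn
      have T2 := hshift u' hu' (J u' + t) hnn'
      have hb : ∀ s : ℕ, ‖(Eexp κ₁)^[s] A - (Eexp κ₁)^[s] B‖ ≤
          ‖Zf u (J u + t + s) - Wf u (J u + t + s)‖ +
          ‖Zf u' (J u' + t + s) - Wf u' (J u' + t + s)‖ := by
        intro s
        rw [hiterA s, hiterB s]
        calc ‖Zf u (J u + t + s) - Zf u' (J u' + t + s)‖ ≤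
            ‖Zf u (J u + t + s) - Wf u (J u + t + s)‖ +
            ‖Wf u (J u + t + s) - Zf u' (J u' + t + s)‖ :=
              norm_sub_le_norm_sub_add_norm_sub _ _ _
          _ = ‖Zf u (J u + t + s) - Wf u (J u + t + s)‖ +
              ‖Zf u' (J u' + t + s) - Wf u' (J u' + t + s)‖ := by
              congr 1
              rw [hWeq s, norm_sub_rev]
      have hsum := T1.add T2
      rw [add_zero] at hsum
      exact squeeze_zero (fun s => norm_nonneg _) hb hsum
    obtain ⟨s0, hs0⟩ := rigidity hAmem hAB
    have hgr : gr κ₁ (repc κ₁ u) (repc κ₁ u') := by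
      refine ⟨s0 + pN, s0 + qN, ?_⟩
      rw [Function.iterate_add_apply, Function.iterate_add_apply]
      exact hs0
    have hrepeq : repc κ₁ u = repc κ₁ u' :=
      repc_congr (gr_trans (gr_symm (repc_rel κ₁ u)) (gr_trans hgr (repc_rel κ₁ u')))
    have hZeq : Zf u = Zf u' := by rw [hZfdef]; simp only [hrepeq]
    have hWeqf : Wf u = Wf u' := by rw [hWfdef]; simp only [hrepeq]
    have hJeq : J u = J u' := by
      have hk2 := key
      rw [hWeqf] at hk2
      have := fo_inj (hPmem u' hu') h₂ hk2
      omega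
    have hlabeq : ∀ k : ℕ, lab ((Eexp κ₁)^[k] u) = lab ((Eexp κ₁)^[k] u') := by
      intro k
      have l1 := hΦlab u hu k
      have l2 := hΦlab u' hu' k
      rw [heq, l2] at l1
      rw [hludef] at l1
      simp only [hZeq, hWeqf, hJeq] at l1
      omega
    have hit : (Eexp κ₁)^[t] u = (Eexp κ₁)^[t] u' := by
      rw [hvalid u hu t ht1, hvalid u' hu' t ht2, hZeq, hJeq]
    exact descend κ₁ t u u' hit (fun k _ => hlabeq k)
  -- surjectivity
  have hsurj : Set.SurjOn Φ (escapingSet κ₁) (escapingSet κ₂) := by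
    intro v hv
    set z' := Q v with hz'def
    have hz' : z' ∈ escapingSet κ₁ := (hQ v hv).1
    have hQsh := (hQ v hv).2
    set r := repc κ₁ z' with hrdef
    set m := mw z' with hmdef
    set n := nw z' with hndef
    have hmnz : (Eexp κ₁)^[m] z' = (Eexp κ₁)^[n] r := hmn z' hz'
    -- the two orbits to compare under rigidity for κ₂
    set A := (Eexp κ₂)^[m] v with hAdef
    set B := Wf z' (n : ℤ) with hBdef
    have hAmem : A ∈ escapingSet κ₂ := (iterate_mem_escaping_iff m).mpr hv
    have hzk : ∀ k : ℕ, (Eexp κ₁)^[k + m] z' = Zf z' ((n : ℤ) + k) := by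
      intro k
      rw [Function.iterate_add_apply, hmnz, ← Function.iterate_add_apply]
      rw [show (Eexp κ₁)^[k + n] r = fullOrbit κ₁ r ((k + n : ℕ) : ℤ) from
        (fo_ofNat κ₁ r (k + n)).symm]
      show fullOrbit κ₁ (repc κ₁ z') _ = fullOrbit κ₁ (repc κ₁ z') _
      congr 1
      push_cast
      ring
    have TAB : Tendsto (fun k : ℕ =>
        ‖(Eexp κ₂)^[k] A - (Eexp κ₂)^[k] B‖) atTop (𝓝 0) := by
      have g1 : Tendsto (fun k : ℕ =>
          ‖(Eexp κ₂)^[k + m] v - (Eexp κ₁)^[k + m] z'‖) atTop (𝓝 0) :=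
        (tendsto_add_atTop_iff_nat m).mpr hQsh
      have g2 := hshift z' hz' (n : ℤ) (by positivity)
      have hb : ∀ k : ℕ, ‖(Eexp κ₂)^[k] A - (Eexp κ₂)^[k] B‖ ≤
          ‖(Eexp κ₂)^[k + m] v - (Eexp κ₁)^[k + m] z'‖ +
          ‖Zf z' ((n : ℤ) + k) - Wf z' ((n : ℤ) + k)‖ := by
        intro k
        have hA1 : (Eexp κ₂)^[k] A = (Eexp κ₂)^[k + m] v := by
          rw [hAdef, ← Function.iterate_add_apply]
        have hB1 : (Eexp κ₂)^[k] B = Wf z' ((n : ℤ) + k) := by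
          rw [hBdef]
          exact fo_iter (hPmem z' hz') h₂ _ k
        rw [hA1, hB1]
        calc ‖(Eexp κ₂)^[k + m] v - Wf z' ((n : ℤ) + k)‖ ≤
            ‖(Eexp κ₂)^[k + m] v - (Eexp κ₁)^[k + m] z'‖ +
            ‖(Eexp κ₁)^[k + m] z' - Wf z' ((n : ℤ) + k)‖ :=
              norm_sub_le_norm_sub_add_norm_sub _ _ _
          _ = ‖(Eexp κ₂)^[k + m] v - (Eexp κ₁)^[k + m] z'‖ +
              ‖Zf z' ((n : ℤ) + k) - Wf z' ((n : ℤ) + k)‖ := by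
              rw [hzk k]
      have hsum := g1.add g2
      rw [add_zero] at hsum
      exact squeeze_zero (fun k => norm_nonneg _) hb hsum
    obtain ⟨s, hs⟩ := rigidity hAmem TAB
    have hvW : (Eexp κ₂)^[s + m] v = Wf z' ((n : ℤ) + s) := by
      have hsm : (Eexp κ₂)^[s + m] v = (Eexp κ₂)^[s] A := by
        rw [hAdef, ← Function.iterate_add_apply]
      rw [hsm, hs, hBdef]
      show (Eexp κ₂)^[s] (fullOrbit κ₂ (P (repc κ₁ z')) (n : ℤ)) = _
      exact fo_iter (hPmem z' hz') h₂ _ s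
    -- build the preimage
    set l' : ℕ → ℤ := fun k => lab ((Eexp κ₂)^[k] v) - lab (Wf z' ((n : ℤ) - m + k)) +
      lab (Zf z' ((n : ℤ) - m + k)) with hl'def
    set u := chainB κ₁ (Zf z' ((n : ℤ) + s)) (m + s) l' with hudef
    have hZmem : Zf z' ((n : ℤ) + s) ∈ escapingSet κ₁ := hZfmem z' hz' _
    have humem : u ∈ escapingSet κ₁ := chainB_mem hZmem h₁ _ _
    have hit : (Eexp κ₁)^[m + s] u = Zf z' ((n : ℤ) + s) := chainB_iter hZmem h₁ _ _
    have hulab : ∀ k, k < m + s → lab ((Eexp κ₁)^[k] u) = l' k :=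
      fun k hk => chainB_lab hZmem h₁ _ _ k hk
    -- u lies in the class of z'
    have hgru : gr κ₁ u z' := by
      have h1 : gr κ₁ u r := by
        refine ⟨m + s, n + s, ?_⟩
        rw [hit, show (Eexp κ₁)^[n + s] r = fullOrbit κ₁ r ((n + s : ℕ) : ℤ) from
          (fo_ofNat κ₁ r (n + s)).symm]
        show fullOrbit κ₁ (repc κ₁ z') _ = fullOrbit κ₁ (repc κ₁ z') _
        congr 1
        try push_cast
        try ring
      exact gr_trans h1 (repc_rel κ₁ z')
    have hrepu : repc κ₁ u = repc κ₁ z' := repc_congr hgru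
    have hZfu : Zf u = Zf z' := by rw [hZfdef]; simp only [hrepu]
    have hWfu : Wf u = Wf z' := by rw [hWfdef]; simp only [hrepu]
    have hJu : J u = (n : ℤ) - m := by
      refine (hJuniq u humem (m + s) ((n : ℤ) - m) ?_).symm
      rw [hit, hZfu]
      congr 1
      push_cast
      ring
    -- iterates of u and v beyond time m+s
    have hvk : ∀ k, m + s ≤ k → (Eexp κ₁)^[k] u = Zf z' ((n : ℤ) - m + k) := by
      intro k hk
      calc (Eexp κ₁)^[k] u = (Eexp κ₁)^[(k - (m+s)) + (m+s)] u := by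
            rw [Nat.sub_add_cancel hk]
        _ = (Eexp κ₁)^[k - (m+s)] ((Eexp κ₁)^[m+s] u) := Function.iterate_add_apply _ _ _ _
        _ = Zf z' ((n : ℤ) - m + k) := by
            rw [hit]
            show (Eexp κ₁)^[k - (m+s)] (fullOrbit κ₁ (repc κ₁ z') ((n : ℤ) + s)) = _
            rw [fo_iter (hrepmem z' hz') h₁]
            congr 1
            omega
    have hwk : ∀ k, m + s ≤ k → (Eexp κ₂)^[k] v = Wf z' ((n : ℤ) - m + k) := by
      intro k hk
      calc (Eexp κ₂)^[k] v = (Eexp κ₂)^[(k - (m+s)) + (s+m)] v := by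
            rw [show (k - (m+s)) + (s+m) = (k - (m+s)) + (m+s) by ring, Nat.sub_add_cancel hk]
        _ = (Eexp κ₂)^[k - (m+s)] ((Eexp κ₂)^[s+m] v) := Function.iterate_add_apply _ _ _ _
        _ = Wf z' ((n : ℤ) - m + k) := by
            rw [hvW]
            show (Eexp κ₂)^[k - (m+s)] (fullOrbit κ₂ (P (repc κ₁ z')) ((n : ℤ) + s)) = _
            rw [fo_iter (hPmem z' hz') h₂]
            congr 1
            omega
    -- now Φ u = v
    refine ⟨u, humem, ?_⟩
    have hT1 : mw u ≤ max (mw u) (m + s) := le_max_left _ _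
    have hT2 : m + s ≤ max (mw u) (m + s) := le_max_right _ _
    set T := max (mw u) (m + s) with hTdef
    apply descend κ₂ T
    · rw [hΦiter u humem T hT1, hwk T hT2, hWfu, hJu]
    · intro k hk
      rw [hΦlab u humem k]
      by_cases hks : k < m + s
      · rw [hludef]
        simp only [hZfu, hWfu, hJu]
        have := hulab k hks
        rw [hl'def] at this
        simp only at this
        omega
      · push_neg at hks
        rw [hludef]
        simp only [hZfu, hWfu, hJu]
        rw [hvk k hks, hwk k hks]
        omega
  exact ⟨Φ, ⟨fun u hu => hΦmem u hu, hinj, hsurj⟩, fun z hz => ⟨hconj z hz, hasymp z hz⟩⟩
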